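/- arXiv:2503.17764 — 8 statements merged into one kernel-verified Lean document; each statement's English description precedes it below -/
import Mathlib

section
/- (Monotonicity) Let C be an [n,k] linear code over F_q with k > 0. Then 1 ≤ d_1(C) < d_2(C) < ··· < d_k(C) ≤ n, i.e., the generalized Hamming weights form a strictly increasing sequence bounded below by 1 and above by n. -/
open Classical

/-- The support of a linear subspace `D` of `ι → F`:
the set of coordinates at which some element of `D` is nonzero. -/
def Submodule.suppSet {F ι : Type*} [Field F] (D : Submodule F (ι → F)) : Set ι :=
  {i | ∃ c ∈ D, c i ≠ 0}

/-- The `r`-th generalized Hamming weight of a linear code `C ⊆ F^ι`: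
the minimum support size of an `r`-dimensional subcode of `C`. -/
noncomputable def ghw {F ι : Type*} [Field F] (C : Submodule F (ι → F)) (r : ℕ) : ℕ :=
  sInf {w | ∃ D : Submodule F (ι → F),
    D ≤ C ∧ Module.finrank F D = r ∧ D.suppSet.ncard = w}

/-- The `r`-th relative generalized Hamming weight of the nested pair `C₂ ⊆ C₁`:
the minimum support size of an `r`-dimensional subcode `D` of `C₁` with `D ∩ C₂ = 0`. -/
noncomputable def rghw {F ι : Type*} [Field F] (C₁ C₂ : Submodule F (ι → F)) (r : ℕ) : ℕ :=
  sInf {w | ∃ D : Submodule F (ι → F),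
    D ≤ C₁ ∧ D ⊓ C₂ = ⊥ ∧ Module.finrank F D = r ∧ D.suppSet.ncard = w}

/-- The dual code of `C ⊆ F^n` with respect to the standard Euclidean inner product. -/
def dualCode {F : Type*} [Field F] {n : ℕ} (C : Submodule F (Fin n → F)) :
    Submodule F (Fin n → F) where
  carrier := {x | ∀ c ∈ C, ∑ i, x i * c i = 0}
  add_mem' := by
    intro a b ha hb c hc
    simp only [Set.mem_setOf_eq] at *
    simp [Pi.add_apply, add_mul, Finset.sum_add_distrib, ha c hc, hb c hc]
  zero_mem' := by simp
  smul_mem' := by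
    intro t a ha c hc
    simp only [Set.mem_setOf_eq] at *
    simp [Pi.smul_apply, smul_eq_mul, mul_assoc, ← Finset.mul_sum, ha c hc]

lemma exists_le_finrank_eq {F M : Type*} [Field F] [AddCommGroup M] [Module F M]
    (W : Submodule F M) {r : ℕ} (hr : r ≤ Module.finrank F W) :
    ∃ E : Submodule F M, E ≤ W ∧ Module.finrank F E = r := by
  obtain ⟨f, hf⟩ := exists_linearIndependent_of_le_finrank (R := F) (M := W) hr
  have hf2 : LinearIndependent F (fun i => (f i : M)) :=
    hf.map' W.subtype W.ker_subtype
  refine ⟨Submodule.span F (Set.range fun i => (f i : M)), ?_, ?_⟩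
  · rw [Submodule.span_le]
    rintro _ ⟨i, rfl⟩
    exact (f i).2
  · rw [finrank_span_eq_card hf2, Fintype.card_fin]

lemma suppSet_mono {F ι : Type*} [Field F] {D D' : Submodule F (ι → F)} (h : D ≤ D') :
    D.suppSet ⊆ D'.suppSet := by
  rintro i ⟨c, hc, hci⟩
  exact ⟨c, h hc, hci⟩

lemma suppSet_nonempty {F ι : Type*} [Field F] {D : Submodule F (ι → F)} (h : D ≠ ⊥) :
    D.suppSet.Nonempty := by
  obtain ⟨c, hc, hc0⟩ := Submodule.exists_mem_ne_zero_of_ne_bot h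
  obtain ⟨i, hi⟩ := Function.ne_iff.mp hc0
  exact ⟨i, c, hc, hi⟩

/-- Monotonicity: for an `[n,k]` linear code `C` with `k > 0`,
`1 ≤ d_1(C) < d_2(C) < ⋯ < d_k(C) ≤ n`. -/
theorem statement_1 {F : Type*} [Field F] [Fintype F] {n k : ℕ}
    (C : Submodule F (Fin n → F)) (hk : Module.finrank F C = k) (hkpos : 0 < k) :
    1 ≤ ghw C 1 ∧ (∀ r : ℕ, 1 ≤ r → r < k → ghw C r < ghw C (r + 1)) ∧ ghw C k ≤ n := by
  have hS : ∀ r : ℕ, r ≤ k → {w | ∃ D : Submodule F (Fin n → F),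
      D ≤ C ∧ Module.finrank F D = r ∧ D.suppSet.ncard = w}.Nonempty := by
    intro r hr
    obtain ⟨E, hE, hEr⟩ := exists_le_finrank_eq C (hk ▸ hr)
    exact ⟨E.suppSet.ncard, E, hE, hEr, rfl⟩
  have key : ∀ r : ℕ, 1 ≤ r → r ≤ k →
      ∃ D : Submodule F (Fin n → F), D ≤ C ∧ Module.finrank F D = r ∧
        D.suppSet.ncard = ghw C r := by
    intro r h1 h2
    obtain ⟨D, hD, hDr, hDw⟩ := Nat.sInf_mem (hS r h2)
    exact ⟨D, hD, hDr, hDw⟩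
  have pos : ∀ r : ℕ, 1 ≤ r → r ≤ k → 1 ≤ ghw C r := by
    intro r h1 h2
    obtain ⟨D, hD, hDr, hDw⟩ := key r h1 h2
    have hDne : D ≠ ⊥ := by
      intro h
      rw [h, finrank_bot] at hDr
      omega
    have := suppSet_nonempty hDne
    have : 0 < D.suppSet.ncard := (Set.ncard_pos (Set.toFinite _)).mpr this
    omega
  refine ⟨pos 1 le_rfl hkpos, ?_, ?_⟩
  · intro r hr1 hrk
    obtain ⟨D, hD, hDr, hDw⟩ := key (r + 1) (by omega) (by omega)
    obtain ⟨i, hi⟩ := suppSet_nonempty (D := D) (by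
      intro h; rw [h, finrank_bot] at hDr; omega)
    set φ : D →ₗ[F] F := (LinearMap.proj i).comp D.subtype with hφ
    have hker : r ≤ Module.finrank F (LinearMap.ker φ) := by
      have h1 := LinearMap.finrank_range_add_finrank_ker φ
      have h2 : Module.finrank F (LinearMap.range φ) ≤ 1 := by
        simpa using (LinearMap.range φ).finrank_le
      omega
    set D' : Submodule F (Fin n → F) := (LinearMap.ker φ).map D.subtype with hD'
    have hD'rank : r ≤ Module.finrank F D' := by
      rwa [hD', Submodule.finrank_map_subtype_eq]
    obtain ⟨E, hED', hEr⟩ := exists_le_finrank_eq D' hD'rank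
    have hD'leD : D' ≤ D := Submodule.map_subtype_le _ _
    have hsupp : E.suppSet ⊆ D.suppSet \ {i} := by
      rintro j ⟨c, hc, hcj⟩
      have hcD' : c ∈ D' := hED' hc
      obtain ⟨⟨d, hd⟩, hdker, rfl⟩ := hcD'
      have hdi : d i = 0 := hdker
      refine ⟨⟨d, hd, hcj⟩, ?_⟩
      simp only [Set.mem_singleton_iff]
      intro hji
      exact hcj (hji ▸ hdi)
    have hlt : E.suppSet.ncard < D.suppSet.ncard := by
      calc E.suppSet.ncard ≤ (D.suppSet \ {i}).ncard :=
            Set.ncard_le_ncard hsupp (Set.toFinite _)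
        _ < D.suppSet.ncard := Set.ncard_diff_singleton_lt_of_mem hi (Set.toFinite _)
    have hle : ghw C r ≤ E.suppSet.ncard :=
      Nat.sInf_le ⟨E, le_trans (le_trans hED' hD'leD) hD, hEr, rfl⟩
    omega
  · obtain ⟨D, _, _, hDw⟩ := key k hkpos le_rfl
    rw [← hDw]
    calc D.suppSet.ncard ≤ (Set.univ : Set (Fin n)).ncard :=
          Set.ncard_le_ncard (Set.subset_univ _) (Set.toFinite _)
      _ = n := by simp [Set.ncard_univ]
end

section
/- (Generalized Singleton Bound) Let C be an [n,k] linear code over F_q. Then for every 1 ≤ r ≤ k, d_r(C) ≤ n − k + r. -/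
open Classical

/-- Generalized Singleton Bound: for an `[n,k]` linear code `C`,
`d_r(C) ≤ n - k + r` for every `1 ≤ r ≤ k`. -/
theorem statement_2 {F : Type*} [Field F] [Fintype F] {n k : ℕ}
    (C : Submodule F (Fin n → F)) (hk : Module.finrank F C = k) :
    ∀ r : ℕ, 1 ≤ r → r ≤ k → ghw C r ≤ n - k + r := by
  intro r hr hrk
  -- k ≤ n
  have hkn : k ≤ n := by
    have h1 : Module.finrank F C ≤ Module.finrank F (Fin n → F) := Submodule.finrank_le C
    simpa [hk, Module.finrank_pi] using h1
  -- choose a set I of k - r coordinates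
  obtain ⟨I, -, hIcard⟩ := Finset.exists_subset_card_eq
    (s := (Finset.univ : Finset (Fin n))) (n := k - r) (by simpa using (Nat.sub_le k r).trans hkn)
  -- the restriction map to coordinates in I
  set φ : (Fin n → F) →ₗ[F] ({i // i ∈ I} → F) :=
    LinearMap.pi fun i : {i // i ∈ I} => LinearMap.proj (i.1 : Fin n) with hφ
  set W : Submodule F (Fin n → F) := LinearMap.ker φ with hW
  have hWrank : n - (k - r) ≤ Module.finrank F W := by
    have h1 : Module.finrank F (LinearMap.range φ) + Module.finrank F W
        = Module.finrank F (Fin n → F) := LinearMap.finrank_range_add_finrank_ker φ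
    have h2 : Module.finrank F (LinearMap.range φ) ≤ k - r := by
      have := Submodule.finrank_le (LinearMap.range φ)
      simpa [Module.finrank_pi, Fintype.card_coe, hIcard] using this
    have h3 : Module.finrank F (Fin n → F) = n := by simp [Module.finrank_pi]
    omega
  -- the shortened code V = C ⊓ W has dimension ≥ r
  set V : Submodule F (Fin n → F) := C ⊓ W with hV
  have hVrank : r ≤ Module.finrank F V := by
    rw [hV]
    have h1 : Module.finrank F ↥(C ⊔ W) + Module.finrank F ↥(C ⊓ W)
        = Module.finrank F C + Module.finrank F W :=
      Submodule.finrank_sup_add_finrank_inf_eq C W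
    have h2 : Module.finrank F ↥(C ⊔ W) ≤ n := by
      have := Submodule.finrank_le (C ⊔ W)
      simpa [Module.finrank_pi] using this
    omega
  -- pick an r-dimensional subspace D of V
  obtain ⟨f, hf⟩ := exists_linearIndependent_of_le_finrank hVrank
  have hfi : LinearIndependent F (fun i => (f i : Fin n → F)) :=
    hf.map' V.subtype (Submodule.ker_subtype V)
  set D : Submodule F (Fin n → F) := Submodule.span F (Set.range fun i => (f i : Fin n → F))
    with hD
  have hDC : D ≤ C := by
    rw [hD, Submodule.span_le]
    rintro _ ⟨i, rfl⟩
    exact (f i).2.1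
  have hDW : D ≤ W := by
    rw [hD, Submodule.span_le]
    rintro _ ⟨i, rfl⟩
    exact (f i).2.2
  have hDrank : Module.finrank F D = r := by
    rw [hD, finrank_span_eq_card hfi, Fintype.card_fin]
  -- support of D avoids I
  have hsupp : D.suppSet ⊆ ((I : Finset (Fin n))ᶜ : Finset (Fin n)) := by
    rintro i ⟨c, hcD, hci⟩
    have hcW : c ∈ W := hDW hcD
    simp only [Finset.coe_compl, Set.mem_compl_iff, Finset.mem_coe]
    intro hiI
    have : φ c = 0 := hcW
    have : φ c ⟨i, hiI⟩ = 0 := by rw [this]; rfl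
    exact hci this
  have hcard : D.suppSet.ncard ≤ n - (k - r) := by
    have := Set.ncard_le_ncard hsupp (Set.toFinite _)
    have h2 : (((I : Finset (Fin n))ᶜ : Finset (Fin n)) : Set (Fin n)).ncard = n - (k - r) := by
      rw [Set.ncard_coe_finset, Finset.card_compl, hIcard, Fintype.card_fin]
    omega
  have hmem : D.suppSet.ncard ∈ {w | ∃ D : Submodule F (Fin n → F),
      D ≤ C ∧ Module.finrank F D = r ∧ D.suppSet.ncard = w} := ⟨D, hDC, hDrank, rfl⟩
  calc ghw C r ≤ D.suppSet.ncard := Nat.sInf_le hmem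
    _ ≤ n - (k - r) := hcard
    _ ≤ n - k + r := by omega
end

section
/- Let C be an MDS linear code over F_q with parameters [n,k,d], that is, a k-dimensional subspace of F_q^n whose minimum distance satisfies d = n − k + 1, with k ≥ 1. Then d_r(C) = n − k + r for every 1 ≤ r ≤ k. -/
open Classical

section Aux

variable {F : Type*} [Field F] {n : ℕ}

lemma suppSet_span_singleton (c : Fin n → F) :
    (Submodule.span F {c}).suppSet = {i | c i ≠ 0} := by
  ext i
  constructor
  · rintro ⟨x, hx, hxi⟩
    obtain ⟨a, rfl⟩ := Submodule.mem_span_singleton.mp hx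
    intro h
    apply hxi
    simp [h]
  · intro h
    exact ⟨c, Submodule.mem_span_singleton_self c, h⟩

lemma ncard_ne_zero_eq_hammingNorm [DecidableEq F] (c : Fin n → F) :
    Set.ncard {i | c i ≠ 0} = hammingNorm c := by
  classical
  have : {i | c i ≠ 0} = ↑(Finset.univ.filter fun i => c i ≠ 0) := by
    ext i; simp
  rw [this, Set.ncard_coe_finset, hammingNorm]

/-- nonemptiness: a subcode of any dimension `r ≤ k` exists -/
lemma exists_subcode {C : Submodule F (Fin n → F)} {r : ℕ}
    (hr : r ≤ Module.finrank F C) :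
    ∃ D : Submodule F (Fin n → F), D ≤ C ∧ Module.finrank F D = r := by
  have : FiniteDimensional F C := FiniteDimensional.finiteDimensional_submodule C
  let b := Module.finBasis F C
  let g : Fin r → Fin n → F := fun j => ((b (Fin.castLE hr j) : C) : Fin n → F)
  have hli : LinearIndependent F g := by
    have h1 : LinearIndependent F (fun i => ((b i : C) : Fin n → F)) :=
      b.linearIndependent.map' C.subtype (Submodule.ker_subtype C)
    exact h1.comp (Fin.castLE hr) (Fin.castLE_injective hr)
  refine ⟨Submodule.span F (Set.range g), ?_, ?_⟩
  · rw [Submodule.span_le]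
    rintro x ⟨j, rfl⟩
    exact (b (Fin.castLE hr j)).2
  · rw [finrank_span_eq_card hli, Fintype.card_fin]

/-- dimension reduction with strictly smaller support -/
lemma exists_smaller_subcode {C D : Submodule F (Fin n → F)} {r : ℕ}
    (hDC : D ≤ C) (hD : Module.finrank F D = r + 1) :
    ∃ D' : Submodule F (Fin n → F), D' ≤ C ∧ Module.finrank F D' = r ∧
      D'.suppSet.ncard < D.suppSet.ncard := by
  have hfd : FiniteDimensional F D := by
    have : Module.Finite F D := Module.finite_of_finrank_eq_succ hD
    exact this
  -- D is nonzero, so it has an element nonzero at some coordinate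
  have hDne : ∃ x : D, (x : Fin n → F) ≠ 0 := by
    have : D ≠ ⊥ := by
      intro h
      rw [h, finrank_bot] at hD
      omega
    obtain ⟨x, hx⟩ := Submodule.exists_mem_ne_zero_of_ne_bot this
    exact ⟨⟨x, hx.1⟩, by simpa using hx.2⟩
  obtain ⟨x, hx⟩ := hDne
  obtain ⟨i, hi⟩ : ∃ i, (x : Fin n → F) i ≠ 0 := by
    by_contra h
    push_neg at h
    exact hx (funext h)
  let f : D →ₗ[F] F := (LinearMap.proj i).comp D.subtype
  have hfx : f x ≠ 0 := hi
  have hsurj : Function.Surjective f := by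
    intro a
    refine ⟨(a * (f x)⁻¹) • x, ?_⟩
    rw [map_smul, smul_eq_mul, mul_assoc, inv_mul_cancel₀ hfx, mul_one]
  have hker : Module.finrank F (LinearMap.ker f) = r := by
    have := LinearMap.finrank_range_add_finrank_ker f
    rw [LinearMap.range_eq_top.mpr hsurj, finrank_top, Module.finrank_self, hD] at this
    omega
  refine ⟨Submodule.map D.subtype (LinearMap.ker f), (Submodule.map_subtype_le D _).trans hDC,
    by rw [Submodule.finrank_map_subtype_eq]; exact hker, ?_⟩
  have hiD : i ∈ D.suppSet := ⟨x, x.2, hi⟩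
  have hsub : (Submodule.map D.subtype (LinearMap.ker f)).suppSet ⊆ D.suppSet \ {i} := by
    rintro j ⟨c, hc, hcj⟩
    obtain ⟨y, hy, rfl⟩ := hc
    refine ⟨⟨y, y.2, hcj⟩, ?_⟩
    intro hji
    rw [Set.mem_singleton_iff] at hji
    subst hji
    exact hcj hy
  refine lt_of_le_of_lt (Set.ncard_le_ncard hsub (Set.toFinite _)) ?_
  exact Set.ncard_diff_singleton_lt_of_mem hiD (Set.toFinite _)

end Aux


/-- if `C` is an MDS `[n,k,d]` code (i.e. `d = n - k + 1`) with `k ≥ 1`,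
then `d_r(C) = n - k + r` for every `1 ≤ r ≤ k`. -/
theorem statement_4 {F : Type*} [Field F] [Fintype F] [DecidableEq F] {n k : ℕ}
    (C : Submodule F (Fin n → F)) (hk : Module.finrank F C = k) (hk1 : 1 ≤ k)
    (hMDS : sInf {w | ∃ c ∈ C, c ≠ (0 : Fin n → F) ∧ hammingNorm c = w} = n - k + 1) :
    ∀ r : ℕ, 1 ≤ r → r ≤ k → ghw C r = n - k + r := by
  classical
  have hkn : k ≤ n := by
    rw [← hk]
    simpa using Submodule.finrank_le C
  -- the defining sets are nonempty for r ≤ k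
  have hne : ∀ r : ℕ, r ≤ k → {w | ∃ D : Submodule F (Fin n → F),
      D ≤ C ∧ Module.finrank F D = r ∧ D.suppSet.ncard = w}.Nonempty := by
    intro r hr
    obtain ⟨D, hDC, hDr⟩ := exists_subcode (hk ▸ hr)
    exact ⟨D.suppSet.ncard, D, hDC, hDr, rfl⟩
  -- strict monotonicity step
  have hstep : ∀ r : ℕ, r + 1 ≤ k → ghw C r + 1 ≤ ghw C (r + 1) := by
    intro r hr
    have hmem := Nat.sInf_mem (hne (r + 1) hr)
    obtain ⟨D, hDC, hDr, hDw⟩ := hmem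
    obtain ⟨D', hD'C, hD'r, hD'w⟩ := exists_smaller_subcode hDC hDr
    have h1 : ghw C r ≤ D'.suppSet.ncard := Nat.sInf_le ⟨D', hD'C, hD'r, rfl⟩
    have h2 : D.suppSet.ncard = ghw C (r + 1) := hDw
    omega
  -- ghw C 1 = n - k + 1
  have h1 : ghw C 1 = n - k + 1 := by
    rw [← hMDS]
    unfold ghw
    congr 1
    ext w
    constructor
    · rintro ⟨D, hDC, hDr, rfl⟩
      have : FiniteDimensional F D := FiniteDimensional.finiteDimensional_submodule D
      have hDne : D ≠ ⊥ := by
        intro h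
        rw [h, finrank_bot] at hDr
        omega
      obtain ⟨c, hcD, hc0⟩ := Submodule.exists_mem_ne_zero_of_ne_bot hDne
      have hspan : Submodule.span F {c} = D := by
        apply Submodule.eq_of_le_of_finrank_eq
        · rw [Submodule.span_le, Set.singleton_subset_iff]; exact hcD
        · rw [finrank_span_singleton hc0, hDr]
      refine ⟨c, hDC hcD, hc0, ?_⟩
      rw [← hspan, suppSet_span_singleton, ncard_ne_zero_eq_hammingNorm]
    · rintro ⟨c, hcC, hc0, rfl⟩
      refine ⟨Submodule.span F {c}, ?_, finrank_span_singleton hc0, ?_⟩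
      · rw [Submodule.span_le, Set.singleton_subset_iff]; exact hcC
      · rw [suppSet_span_singleton, ncard_ne_zero_eq_hammingNorm]
  -- ghw C k ≤ n
  have hkub : ghw C k ≤ n := by
    have : ghw C k ≤ C.suppSet.ncard := Nat.sInf_le ⟨C, le_refl C, hk, rfl⟩
    refine this.trans ?_
    have : C.suppSet.ncard ≤ (Set.univ : Set (Fin n)).ncard :=
      Set.ncard_le_ncard (Set.subset_univ _) (Set.toFinite _)
    rwa [Set.ncard_univ, Nat.card_eq_fintype_card, Fintype.card_fin] at this
  -- lower bound by induction
  have hlow : ∀ r : ℕ, 1 ≤ r → r ≤ k → n - k + r ≤ ghw C r := by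
    intro r
    induction r with
    | zero => omega
    | succ m ih =>
      intro _ hmk
      rcases Nat.eq_or_lt_of_le (show 1 ≤ m + 1 by omega) with h | h
      · rw [← h, h1]
      · have h2 := ih (by omega) (by omega)
        have h3 := hstep m hmk
        omega
  -- upper bound: ghw C r + (k - r) ≤ ghw C k
  have hup : ∀ j r : ℕ, r + j ≤ k → ghw C r + j ≤ ghw C (r + j) := by
    intro j
    induction j with
    | zero => intro r _; simp
    | succ m ih =>
      intro r hrm
      have h2 := ih r (by omega)
      have h3 := hstep (r + m) (by omega)
      calc ghw C r + (m + 1) ≤ ghw C (r + m) + 1 := by omega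
        _ ≤ ghw C (r + m + 1) := h3
        _ = ghw C (r + (m + 1)) := by ring_nf
  intro r hr1 hrk
  have hu := hup (k - r) r (by omega)
  rw [show r + (k - r) = k by omega] at hu
  have hl := hlow r hr1 hrk
  omega
end

section
/- (Correctness of the single-matrix Brouwer–Zimmermann stopping criterion) Let C ⊆ F_q^n be a linear code of dimension k with a generator matrix of the form G = (I_k | A), and fix 1 ≤ r ≤ k and r ≤ w < k. Define d' = min{|supp(enc_G(E))| : E ⊆ F_q^k a subspace with dim E = r and |supp(E)| ≤ w}. If w + 1 ≥ d', then d_r(C) = d'. -/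
open Classical

lemma exists_E0 {F : Type*} [Field F] {k r : ℕ} (hrk : r ≤ k) :
    ∃ E : Submodule F (Fin k → F), Module.finrank F E = r ∧
      E.suppSet ⊆ Set.range (Fin.castLE hrk) := by
  classical
  set v : Fin r → (Fin k → F) := fun i => Pi.basisFun F (Fin k) (Fin.castLE hrk i) with hv
  have hli : LinearIndependent F v :=
    (Pi.basisFun F (Fin k)).linearIndependent.comp _ (Fin.castLE_injective hrk)
  refine ⟨Submodule.span F (Set.range v), ?_, ?_⟩
  · rw [finrank_span_eq_card hli, Fintype.card_fin]
  · set K : Submodule F (Fin k → F) :=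
      { carrier := {x | ∀ j : Fin k, j ∉ Set.range (Fin.castLE hrk) → x j = 0}
        add_mem' := fun ha hb j hj => by simp [ha j hj, hb j hj]
        zero_mem' := fun j hj => rfl
        smul_mem' := fun c x hx j hj => by simp [hx j hj] } with hK
    have hle : Submodule.span F (Set.range v) ≤ K := by
      rw [Submodule.span_le]
      rintro _ ⟨i, rfl⟩ j hj
      have : Fin.castLE hrk i ≠ j := fun h => hj ⟨i, h⟩
      simp [hv, Pi.basisFun_apply, Pi.single_apply, this]
    rintro j ⟨x, hx, hxj⟩
    by_contra h
    exact hxj (hle hx j h)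


/-- Correctness of the single-matrix Brouwer–Zimmermann stopping
criterion: let `C ⊆ F_q^n` (with `n = k + m`) have generator matrix `G = (I_k | A)`,
fix `1 ≤ r ≤ k` and `r ≤ w < k`, and let
`d' = min{|supp(enc_G(E))| : E ⊆ F_q^k, dim E = r, |supp(E)| ≤ w}`.
If `w + 1 ≥ d'`, then `d_r(C) = d'`. -/
theorem statement_11 {F : Type*} [Field F] [Fintype F] {k m r w d' : ℕ}
    (A : Matrix (Fin k) (Fin m) F)
    (G : Matrix (Fin k) (Fin k ⊕ Fin m) F) (hG : G = Matrix.fromCols 1 A)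
    (C : Submodule F (Fin k ⊕ Fin m → F))
    (hGspan : Submodule.span F (Set.range fun i => G i) = C)
    (hr1 : 1 ≤ r) (hrk : r ≤ k) (hrw : r ≤ w) (hwk : w < k)
    (hd' : d' = sInf {s | ∃ E : Submodule F (Fin k → F),
      Module.finrank F E = r ∧ E.suppSet.ncard ≤ w ∧
      (Submodule.map G.vecMulLinear E).suppSet.ncard = s})
    (hstop : w + 1 ≥ d') :
    ghw C r = d' := by
  classical
  have hfl : ∀ (x : Fin k → F) (i : Fin k), G.vecMulLinear x (Sum.inl i) = x i := by
    intro x i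
    simp [hG, Matrix.vecMulLinear_apply]
  have hinj : Function.Injective G.vecMulLinear := by
    intro x y h
    funext i
    have := congrFun h (Sum.inl i)
    rwa [hfl, hfl] at this
  have hrange : LinearMap.range G.vecMulLinear = C := by
    rw [range_vecMulLinear, ← hGspan]; rfl
  -- finrank of image
  have hfr : ∀ E : Submodule F (Fin k → F),
      Module.finrank F (Submodule.map G.vecMulLinear E) = Module.finrank F E :=
    fun E => (Submodule.equivMapOfInjective _ hinj E).finrank_eq.symm
  -- support inequality
  have hsupp : ∀ E : Submodule F (Fin k → F),
      E.suppSet.ncard ≤ (Submodule.map G.vecMulLinear E).suppSet.ncard := by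
    intro E
    refine Set.ncard_le_ncard_of_injOn Sum.inl ?_ Sum.inl_injective.injOn (Set.toFinite _)
    rintro i ⟨x, hx, hxi⟩
    exact ⟨G.vecMulLinear x, Submodule.mem_map_of_mem hx, by rwa [hfl]⟩
  set S := {s | ∃ E : Submodule F (Fin k → F),
      Module.finrank F E = r ∧ E.suppSet.ncard ≤ w ∧
      (Submodule.map G.vecMulLinear E).suppSet.ncard = s} with hSdef
  -- S nonempty
  obtain ⟨E₀, hE₀r, hE₀s⟩ := exists_E0 (F := F) hrk
  have hS_ne : S.Nonempty := by
    refine ⟨_, E₀, hE₀r, ?_, rfl⟩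
    calc E₀.suppSet.ncard ≤ (Set.range (Fin.castLE hrk)).ncard :=
          Set.ncard_le_ncard hE₀s (Set.toFinite _)
      _ ≤ w := by
          rw [← Set.image_univ, Set.ncard_image_of_injective _ (Fin.castLE_injective hrk),
            Set.ncard_univ, Nat.card_eq_fintype_card, Fintype.card_fin]
          exact hrw
  have hd'S : d' ∈ S := by rw [hd']; exact Nat.sInf_mem hS_ne
  obtain ⟨E, hEr, hEw, hEs⟩ := hd'S
  -- ghw ≤ d'
  have h1 : ghw C r ≤ d' := by
    apply Nat.sInf_le
    refine ⟨Submodule.map G.vecMulLinear E, ?_, ?_, hEs⟩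
    · rw [← hrange]; exact LinearMap.map_le_range
    · rw [hfr, hEr]
  -- d' ≤ ghw
  have hT_ne : {u | ∃ D : Submodule F (Fin k ⊕ Fin m → F),
      D ≤ C ∧ Module.finrank F D = r ∧ D.suppSet.ncard = u}.Nonempty := by
    refine ⟨d', Submodule.map G.vecMulLinear E, ?_, ?_, hEs⟩
    · rw [← hrange]; exact LinearMap.map_le_range
    · rw [hfr, hEr]
  have hgmem : ghw C r ∈ {u | ∃ D : Submodule F (Fin k ⊕ Fin m → F),
      D ≤ C ∧ Module.finrank F D = r ∧ D.suppSet.ncard = u} := Nat.sInf_mem hT_ne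
  obtain ⟨D, hDC, hDr, hDs⟩ := hgmem
  have hDrange : D ≤ LinearMap.range G.vecMulLinear := by rw [hrange]; exact hDC
  set E' := Submodule.comap G.vecMulLinear D with hE'
  have hmap : Submodule.map G.vecMulLinear E' = D := by
    rw [hE', Submodule.map_comap_eq, inf_eq_right.mpr hDrange]
  have hE'r : Module.finrank F E' = r := by
    rw [← hDr, ← hmap, hfr]
  have h2 : d' ≤ ghw C r := by
    by_cases hcase : E'.suppSet.ncard ≤ w
    · rw [hd']
      apply Nat.sInf_le
      refine ⟨E', hE'r, hcase, ?_⟩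
      rw [hmap]; exact hDs
    · push_neg at hcase
      have : w + 1 ≤ (Submodule.map G.vecMulLinear E').suppSet.ncard :=
        le_trans hcase (hsupp E')
      rw [hmap, hDs] at this
      omega
  omega
end

section
/- (Lower bound from disjoint information sets) Let C ⊆ F_q^n be a linear code of dimension k and let I_1, ..., I_m ⊆ {1,...,n} be pairwise disjoint information sets for C. For each j, let G_j be a generator matrix of C whose columns indexed by I_j form the identity I_k. Let D ⊆ C be a subcode of dimension r and let w ≥ r be an integer such that, for every j = 1, ..., m, the projection E_j = π_{I_j}(D) ⊆ F_q^{I_j} satisfies |supp(E_j)| ≥ w + 1 (equivalently, D is not of the form enc_{G_j}(E) for any subspace E with |supp(E)| ≤ w). Then |supp(D)| ≥ m(w + 1). -/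
open Classical

/-- Lower bound from disjoint information sets: let `I_1, …, I_m` be
pairwise disjoint information sets for the `[n,k]` code `C`, with generator matrices
`G_j` whose columns indexed by `I_j` form the identity. If `D ⊆ C` is a subcode of
dimension `r` and `w ≥ r` is such that each projection `E_j = π_{I_j}(D)` satisfies
`|supp(E_j)| ≥ w + 1`, then `|supp(D)| ≥ m(w + 1)`. -/
theorem statement_14 {F : Type*} [Field F] [Fintype F] {n k m r w : ℕ}
    (C : Submodule F (Fin n → F)) (hk : Module.finrank F C = k)
    (I : Fin m → Finset (Fin n))
    (hdisj : ∀ i j : Fin m, i ≠ j → Disjoint (I i) (I j))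
    (hcard : ∀ j : Fin m, (I j).card = k)
    (G : Fin m → Matrix (Fin k) (Fin n) F)
    (hGind : ∀ j : Fin m, LinearIndependent F (fun i => G j i))
    (hGspan : ∀ j : Fin m, Submodule.span F (Set.range fun i => G j i) = C)
    (hGid : ∀ j : Fin m, ∀ a b : Fin k,
      G j a (((I j).orderIsoOfFin (hcard j) b : Fin n)) = if a = b then 1 else 0)
    (D : Submodule F (Fin n → F)) (hD : D ≤ C) (hr : Module.finrank F D = r)
    (hrw : r ≤ w)
    (hsupp : ∀ j : Fin m, w + 1 ≤
      (Submodule.map (LinearMap.funLeft F F ((↑) : ↥(I j) → Fin n)) D).suppSet.ncard) :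
    m * (w + 1) ≤ D.suppSet.ncard := by
  classical
  -- For each j, the support of the projection embeds into D.suppSet ∩ I j
  set T : Fin m → Finset (Fin n) := fun j => (D.suppSet).toFinset ∩ I j with hT
  have hle : ∀ j : Fin m, w + 1 ≤ (T j).card := by
    intro j
    refine le_trans (hsupp j) ?_
    have himg : Subtype.val '' (Submodule.map
        (LinearMap.funLeft F F ((↑) : ↥(I j) → Fin n)) D).suppSet ⊆ (T j : Set (Fin n)) := by
      rintro _ ⟨s, hs, rfl⟩
      obtain ⟨c, ⟨d, hd, rfl⟩, hc⟩ := hs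
      simp only [hT, Finset.coe_inter, Set.mem_inter_iff, Finset.mem_coe, Set.coe_toFinset]
      exact ⟨⟨d, hd, hc⟩, s.2⟩
    calc (Submodule.map (LinearMap.funLeft F F ((↑) : ↥(I j) → Fin n)) D).suppSet.ncard
        = (Subtype.val '' (Submodule.map (LinearMap.funLeft F F ((↑) : ↥(I j) → Fin n))
            D).suppSet).ncard := (Set.ncard_image_of_injective _ Subtype.val_injective).symm
      _ ≤ (T j : Set (Fin n)).ncard := Set.ncard_le_ncard himg (Set.toFinite _)
      _ = (T j).card := by rw [Set.ncard_coe_finset]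
  have hTdisj : ∀ i ∈ (Finset.univ : Finset (Fin m)), ∀ j ∈ Finset.univ, i ≠ j →
      Disjoint (T i) (T j) := by
    intro i _ j _ hij
    exact Finset.disjoint_of_subset_left Finset.inter_subset_right
      (Finset.disjoint_of_subset_right Finset.inter_subset_right (hdisj i j hij))
  have hsub : (Finset.univ.biUnion T) ⊆ (D.suppSet).toFinset := by
    intro x hx
    simp only [Finset.mem_biUnion] at hx
    obtain ⟨j, _, hj⟩ := hx
    exact Finset.mem_of_mem_inter_left hj
  calc m * (w + 1) = ∑ _j : Fin m, (w + 1) := by simp [mul_comm]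
    _ ≤ ∑ j : Fin m, (T j).card := Finset.sum_le_sum fun j _ => hle j
    _ = (Finset.univ.biUnion T).card := (Finset.card_biUnion hTdisj).symm
    _ ≤ (D.suppSet).toFinset.card := Finset.card_le_card hsub
    _ = D.suppSet.ncard := by rw [Set.ncard_eq_toFinset_card']
end

section
/- (Lower bound with redundancies for overlapping information sets) Let C ⊆ F_q^n be a linear code of dimension k and let I_1, ..., I_m ⊆ {1,...,n} be information sets for C (not necessarily disjoint). Define the redundancy of I_j as R_j = |I_j ∩ (I_1 ∪ ··· ∪ I_{j−1})| (with R_1 = 0). Let D ⊆ C be a subcode of dimension r and let w ≥ r be an integer such that, for every j = 1, ..., m, the projection E_j = π_{I_j}(D) satisfies |supp(E_j)| ≥ w + 1. Then |supp(D)| ≥ Σ_{j=1}^m max{0, (w+1) − R_j}. -/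
open Classical

/-- Lower bound with redundancies for overlapping information sets:
let `I_1, …, I_m` be (not necessarily disjoint) information sets for the `[n,k]` code
`C`, with generator matrices `G_j` whose columns indexed by `I_j` form the identity,
and redundancies `R_j = |I_j ∩ (I_1 ∪ ⋯ ∪ I_{j-1})|`. If `D ⊆ C` is a subcode of
dimension `r` and `w ≥ r` is such that each projection `E_j = π_{I_j}(D)` satisfies
`|supp(E_j)| ≥ w + 1`, then `|supp(D)| ≥ Σ_j max{0, (w+1) - R_j}`
(where the `ℕ`-valued truncated subtraction `(w+1) - R_j` equals `max{0,(w+1)-R_j}`). -/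
theorem statement_15 {F : Type*} [Field F] [Fintype F] {n k m r w : ℕ}
    (C : Submodule F (Fin n → F)) (hk : Module.finrank F C = k)
    (I : Fin m → Finset (Fin n))
    (hcard : ∀ j : Fin m, (I j).card = k)
    (G : Fin m → Matrix (Fin k) (Fin n) F)
    (hGind : ∀ j : Fin m, LinearIndependent F (fun i => G j i))
    (hGspan : ∀ j : Fin m, Submodule.span F (Set.range fun i => G j i) = C)
    (hGid : ∀ j : Fin m, ∀ a b : Fin k,
      G j a (((I j).orderIsoOfFin (hcard j) b : Fin n)) = if a = b then 1 else 0)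
    (R : Fin m → ℕ)
    (hR : ∀ j : Fin m,
      R j = ((I j) ∩ ((Finset.univ.filter fun t : Fin m => t < j).biUnion I)).card)
    (D : Submodule F (Fin n → F)) (hD : D ≤ C) (hr : Module.finrank F D = r)
    (hrw : r ≤ w)
    (hsupp : ∀ j : Fin m, w + 1 ≤
      (Submodule.map (LinearMap.funLeft F F ((↑) : ↥(I j) → Fin n)) D).suppSet.ncard) :
    ∑ j : Fin m, ((w + 1) - R j) ≤ D.suppSet.ncard := by
  classical
  have hSfin : D.suppSet.Finite := Set.toFinite _
  set s : Finset (Fin n) := hSfin.toFinset with hs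
  set B : Fin m → Finset (Fin n) :=
    fun j => (Finset.univ.filter fun t : Fin m => t < j).biUnion I with hB
  set f : Fin m → Finset (Fin n) := fun j => (I j ∩ s) \ B j with hf
  have hkey : ∀ j : Fin m, w + 1 ≤ (I j ∩ s).card := by
    intro j
    have h1 : (Submodule.map (LinearMap.funLeft F F ((↑) : ↥(I j) → Fin n)) D).suppSet
        = ((↑) : ↥(I j) → Fin n) ⁻¹' D.suppSet := by
      ext i
      simp only [Submodule.suppSet, Set.mem_setOf_eq, Set.mem_preimage, Submodule.mem_map]
      constructor
      · rintro ⟨c, ⟨d, hd, rfl⟩, hne⟩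
        exact ⟨d, hd, hne⟩
      · rintro ⟨d, hd, hne⟩
        exact ⟨_, ⟨d, hd, rfl⟩, hne⟩
    have h2 : ((((↑) : ↥(I j) → Fin n)) ⁻¹' D.suppSet).ncard = (I j ∩ s).card := by
      rw [← Set.ncard_image_of_injective _ Subtype.coe_injective,
        Set.image_preimage_eq_inter_range]
      have heq : D.suppSet ∩ (Set.range fun a : ↥(I j) => (a : Fin n)) = ↑(I j ∩ s) := by
        ext x
        simp only [Set.mem_inter_iff, Finset.coe_inter, hs, Set.Finite.coe_toFinset,
          Finset.mem_coe, Set.mem_range, Subtype.exists, exists_prop, exists_eq_right]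
        tauto
      rw [heq, Set.ncard_coe_finset]
    calc w + 1 ≤ _ := hsupp j
      _ = _ := by rw [h1, h2]
  have hsum : ∀ j, (w + 1) - R j ≤ (f j).card := by
    intro j
    have hsub : I j ∩ s ⊆ f j ∪ (I j ∩ B j) := by
      intro x hx
      by_cases hxB : x ∈ B j
      · exact Finset.mem_union_right _
          (Finset.mem_inter.mpr ⟨(Finset.mem_inter.mp hx).1, hxB⟩)
      · exact Finset.mem_union_left _ (Finset.mem_sdiff.mpr ⟨hx, hxB⟩)
    have h1 := Finset.card_le_card hsub
    have h2 := Finset.card_union_le (f j) (I j ∩ B j)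
    have h3 : R j = (I j ∩ B j).card := hR j
    have h4 := hkey j
    omega
  have hdisj : ∀ i j : Fin m, i < j → Disjoint (f i) (f j) := by
    intro i j hij
    have h1 : f i ⊆ B j := by
      intro x hx
      have : x ∈ I i := (Finset.mem_inter.mp (Finset.mem_sdiff.mp hx).1).1
      exact Finset.mem_biUnion.mpr ⟨i, Finset.mem_filter.mpr ⟨Finset.mem_univ _, hij⟩, this⟩
    have h2 : Disjoint (B j) (f j) := Finset.disjoint_sdiff
    exact (h2.mono_left h1)
  have hdisj' : (↑(Finset.univ : Finset (Fin m)) : Set (Fin m)).PairwiseDisjoint f := by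
    intro i _ j _ hij
    rcases lt_or_gt_of_ne hij with h | h
    · exact hdisj i j h
    · exact (hdisj j i h).symm
  have hcardU : (Finset.univ.biUnion f).card = ∑ j : Fin m, (f j).card :=
    Finset.card_biUnion fun i _ j _ hij => hdisj' (Finset.mem_coe.mpr (Finset.mem_univ i))
      (Finset.mem_coe.mpr (Finset.mem_univ j)) hij
  have hUsub : Finset.univ.biUnion f ⊆ s := by
    intro x hx
    obtain ⟨j, _, hxj⟩ := Finset.mem_biUnion.mp hx
    exact (Finset.mem_inter.mp (Finset.mem_sdiff.mp hxj).1).2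
  have hfinal : ∑ j : Fin m, (f j).card ≤ s.card := by
    rw [← hcardU]; exact Finset.card_le_card hUsub
  have hscard : s.card = D.suppSet.ncard := (Set.ncard_eq_toFinset_card _ hSfin).symm
  calc ∑ j : Fin m, ((w + 1) - R j) ≤ ∑ j : Fin m, (f j).card :=
        Finset.sum_le_sum fun j _ => hsum j
    _ ≤ s.card := hfinal
    _ = D.suppSet.ncard := hscard
end

section
/- (Inclusion–exclusion count of subspaces with given support size) Fix a prime power q and integers 1 ≤ r ≤ w ≤ k. Let e_w^r denote the number of r-dimensional linear subspaces E ⊆ F_q^k with |supp(E)| = w, and for integers 0 ≤ s ≤ m let G_q(m, s) denote the number of s-dimensional linear subspaces of F_q^m (the Gaussian binomial coefficient [m choose s]_q). Then e_w^r = C(k,w) · Σ_{i=0}^{w−r} (−1)^i C(w,i) G_q(w−i, r), where C(a,b) denotes the ordinary binomial coefficient. -/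
open Classical

section Aux
variable {F : Type*} [Field F] {k r : ℕ}

def suppW (T : Finset (Fin k)) : Submodule F (Fin k → F) where
  carrier := {x | ∀ i ∉ T, x i = 0}
  add_mem' := fun ha hb i hi => by simp [ha i hi, hb i hi]
  zero_mem' := fun i hi => rfl
  smul_mem' := fun c x hx i hi => by simp [hx i hi]

lemma le_suppW_iff {E : Submodule F (Fin k → F)} {T : Finset (Fin k)} :
    E ≤ suppW T ↔ E.suppSet ⊆ ↑T := by
  constructor
  · rintro h i ⟨c, hc, hci⟩
    by_contra hiT
    exact hci (h hc i hiT)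
  · intro h c hc i hi
    by_contra hci
    exact hi (h ⟨c, hc, hci⟩)

noncomputable def suppWEquiv (T : Finset (Fin k)) :
    (suppW (F := F) T) ≃ₗ[F] (Fin T.card → F) :=
  LinearEquiv.trans
    { toFun := fun x i => x.1 i.1
      map_add' := fun x y => rfl
      map_smul' := fun c x => rfl
      invFun := fun y => ⟨fun i => if h : i ∈ T then y ⟨i, h⟩ else 0, fun i hi => dif_neg hi⟩
      left_inv := fun x => Subtype.ext (funext fun i => by
        by_cases h : i ∈ T
        · simp [h]
        · simp [h, x.2 i h])
      right_inv := fun y => funext fun i => by simp }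
    (LinearEquiv.funCongrLeft F F T.equivFin.symm)

set_option synthInstance.maxHeartbeats 1000000 in
set_option maxHeartbeats 1000000 in
lemma card_supp_subset (T : Finset (Fin k)) :
    Nat.card {E : Submodule F (Fin k → F) //
        Module.finrank F E = r ∧ E.suppSet ⊆ ↑T}
      = Nat.card {S : Submodule F (Fin T.card → F) // Module.finrank F S = r} := by
  set W : Submodule F (Fin k → F) := suppW T with hW
  set e : W ≃ₗ[F] (Fin T.card → F) := suppWEquiv T with he
  have h1 : ∀ X : Submodule F W,
      Submodule.map e.symm.toLinearMap (Submodule.map e.toLinearMap X) = X :=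
    fun X => (Submodule.map_symm_eq_iff e).mpr rfl
  have h2 : ∀ S : Submodule F (Fin T.card → F),
      Submodule.map e.toLinearMap (Submodule.map e.symm.toLinearMap S) = S :=
    fun S => (Submodule.map_symm_eq_iff e).mp rfl
  have h3 : ∀ X : Submodule F W,
      Submodule.comap W.subtype (Submodule.map W.subtype X) = X :=
    Submodule.comap_map_eq_of_injective W.injective_subtype
  refine Nat.card_congr
    { toFun := fun E => ⟨Submodule.map e.toLinearMap
        (Submodule.comap W.subtype E.1), ?_⟩
      invFun := fun S => ⟨Submodule.map W.subtype
        (Submodule.map e.symm.toLinearMap S.1), ?_, ?_⟩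
      left_inv := ?_
      right_inv := ?_ }
  · obtain ⟨E, hr, hsupp⟩ := E
    have hle : E ≤ W := le_suppW_iff.mpr hsupp
    exact (LinearEquiv.finrank_map_eq e _).trans
      ((LinearEquiv.finrank_eq (Submodule.comapSubtypeEquivOfLe hle)).trans hr)
  · obtain ⟨S, hr⟩ := S
    exact ((LinearEquiv.finrank_eq
        (Submodule.equivMapOfInjective W.subtype W.injective_subtype _)).symm.trans
      (LinearEquiv.finrank_map_eq e.symm _)).trans hr
  · exact le_suppW_iff.mp (Submodule.map_subtype_le _ _)
  · rintro ⟨E, hr, hsupp⟩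
    have hle : E ≤ W := le_suppW_iff.mpr hsupp
    apply Subtype.ext
    show Submodule.map W.subtype
        (Submodule.map e.symm.toLinearMap
          (Submodule.map e.toLinearMap (Submodule.comap W.subtype E))) = E
    rw [h1, Submodule.map_comap_subtype]
    exact inf_eq_right.mpr hle
  · rintro ⟨S, hr⟩
    apply Subtype.ext
    show Submodule.map e.toLinearMap
        (Submodule.comap W.subtype
          (Submodule.map W.subtype (Submodule.map e.symm.toLinearMap S))) = S
    rw [h3, h2]

end Aux

/-- Inclusion–exclusion count of subspaces with given support size:
for a finite field `F` with `q` elements and `1 ≤ r ≤ w ≤ k`, the number `e_w^r` of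
`r`-dimensional subspaces `E ⊆ F^k` with `|supp(E)| = w` satisfies
`e_w^r = C(k,w) · Σ_{i=0}^{w-r} (-1)^i C(w,i) [w-i choose r]_q`, where the Gaussian
binomial `[m choose s]_q` is the number of `s`-dimensional subspaces of `F^m`. -/
theorem statement_16 {F : Type*} [Field F] [Fintype F] {k r w : ℕ}
    (hr : 1 ≤ r) (hrw : r ≤ w) (hwk : w ≤ k) :
    (Nat.card {E : Submodule F (Fin k → F) //
        Module.finrank F E = r ∧ E.suppSet.ncard = w} : ℤ)
      = (k.choose w : ℤ) * ∑ i ∈ Finset.range (w - r + 1),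
          (-1 : ℤ) ^ i * (w.choose i : ℤ) *
            (Nat.card {S : Submodule F (Fin (w - i) → F) //
              Module.finrank F S = r} : ℤ) := by
  classical
  haveI : Finite (Submodule F (Fin k → F)) :=
    Finite.of_injective (SetLike.coe : Submodule F (Fin k → F) → Set (Fin k → F))
      SetLike.coe_injective
  haveI : Fintype (Submodule F (Fin k → F)) := Fintype.ofFinite _
  set g : ℕ → ℤ :=
    fun m => (Nat.card {S : Submodule F (Fin m → F) // Module.finrank F S = r} : ℤ) with hg
  set Nn : Finset (Fin k) → ℤ := fun U =>
    ((Finset.univ.filter fun E : Submodule F (Fin k → F) =>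
      Module.finrank F E = r ∧ E.suppSet ⊆ ↑U).card : ℤ) with hNn
  set Mm : Finset (Fin k) → ℤ := fun U =>
    ((Finset.univ.filter fun E : Submodule F (Fin k → F) =>
      Module.finrank F E = r ∧ E.suppSet = ↑U).card : ℤ) with hMm
  -- Step A : Nn U = g U.card
  have stepA : ∀ U : Finset (Fin k), Nn U = g U.card := by
    intro U
    have h : (Finset.univ.filter fun E : Submodule F (Fin k → F) =>
        Module.finrank F E = r ∧ E.suppSet ⊆ ↑U).card
        = Nat.card {E : Submodule F (Fin k → F) //
            Module.finrank F E = r ∧ E.suppSet ⊆ ↑U} := by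
      rw [Nat.card_eq_fintype_card, Fintype.card_subtype]
    simp only [hNn, hg, h, card_supp_subset]
  -- Step B : inclusion–exclusion
  have stepB : ∀ T : Finset (Fin k), T.card = w →
      Mm T = ∑ S ∈ T.powerset, (-1 : ℤ) ^ (T.card - S.card) * Nn S := by
    intro T hT
    have hNsum : ∀ S ∈ T.powerset, Nn S =
        ∑ E ∈ Finset.univ.filter (fun E : Submodule F (Fin k → F) =>
          Module.finrank F E = r ∧ E.suppSet ⊆ ↑T),
          (if E.suppSet ⊆ ↑S then (1 : ℤ) else 0) := by
      intro S hS
      rw [Finset.mem_powerset] at hS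
      rw [Finset.sum_boole]
      simp only [hNn]
      congr 1
      rw [Finset.filter_filter]
      apply congrArg
      apply Finset.filter_congr
      intro E _
      constructor
      · rintro ⟨h1, h2⟩; exact ⟨⟨h1, h2.trans (by exact_mod_cast hS)⟩, h2⟩
      · rintro ⟨⟨h1, _⟩, h2⟩; exact ⟨h1, h2⟩
    calc Mm T = ∑ E ∈ Finset.univ.filter (fun E : Submodule F (Fin k → F) =>
          Module.finrank F E = r ∧ E.suppSet ⊆ ↑T),
          (if E.suppSet.toFinset = T then (1 : ℤ) else 0) := by
          rw [Finset.sum_boole]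
          simp only [hMm]
          congr 1
          rw [Finset.filter_filter]
          apply congrArg
          apply Finset.filter_congr
          intro E _
          constructor
          · rintro ⟨h1, h2⟩
            refine ⟨⟨h1, ?_⟩, ?_⟩
            · rw [h2]
            · rw [h2]; simp
          · rintro ⟨⟨h1, _⟩, h2⟩
            exact ⟨h1, by rw [← h2, Set.coe_toFinset]⟩
      _ = ∑ E ∈ Finset.univ.filter (fun E : Submodule F (Fin k → F) =>
          Module.finrank F E = r ∧ E.suppSet ⊆ ↑T),
          ∑ S ∈ T.powerset, (-1 : ℤ) ^ (T.card - S.card) *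
            (if E.suppSet ⊆ ↑S then (1 : ℤ) else 0) := by
          apply Finset.sum_congr rfl
          intro E hE
          rw [Finset.mem_filter] at hE
          obtain ⟨-, -, hsupp⟩ := hE
          set sE : Finset (Fin k) := E.suppSet.toFinset with hsE
          have hsub : sE ⊆ T := Set.toFinset_subset.mpr hsupp
          have hcond : ∀ S : Finset (Fin k), E.suppSet ⊆ ↑S ↔ sE ⊆ S :=
            fun S => Set.toFinset_subset.symm
          symm
          calc ∑ S ∈ T.powerset, (-1 : ℤ) ^ (T.card - S.card) *
                (if E.suppSet ⊆ ↑S then (1 : ℤ) else 0)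
              = ∑ S ∈ T.powerset.filter (fun S => sE ⊆ S),
                  (-1 : ℤ) ^ (T.card - S.card) := by
                rw [Finset.sum_filter]
                apply Finset.sum_congr rfl
                intro S _
                rw [hcond]
                by_cases h : sE ⊆ S <;> simp [h]
            _ = ∑ U ∈ (T \ sE).powerset, (-1 : ℤ) ^ ((T \ sE).card - U.card) := by
                refine Finset.sum_nbij' (fun S => S \ sE) (fun U => sE ∪ U) ?_ ?_ ?_ ?_ ?_
                · intro S hS
                  rw [Finset.mem_filter, Finset.mem_powerset] at hS
                  exact Finset.mem_powerset.mpr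
                    (Finset.sdiff_subset_sdiff hS.1 (le_refl _))
                · intro U hU
                  rw [Finset.mem_powerset] at hU
                  rw [Finset.mem_filter, Finset.mem_powerset]
                  exact ⟨Finset.union_subset hsub (hU.trans Finset.sdiff_subset),
                    Finset.subset_union_left⟩
                · intro S hS
                  rw [Finset.mem_filter] at hS
                  exact Finset.union_sdiff_of_subset hS.2
                · intro U hU
                  rw [Finset.mem_powerset] at hU
                  have hd : Disjoint sE U :=
                    (Finset.disjoint_of_subset_right hU Finset.sdiff_disjoint.symm)
                  show (sE ∪ U) \ sE = U
                  rw [Finset.union_sdiff_cancel_left hd]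
                · intro S hS
                  rw [Finset.mem_filter, Finset.mem_powerset] at hS
                  congr 1
                  have h1 := Finset.card_le_card hS.1
                  have h2 := Finset.card_le_card hS.2
                  have h3 := Finset.card_le_card hsub
                  rw [Finset.card_sdiff_of_subset hsub, Finset.card_sdiff_of_subset hS.2]
                  omega
            _ = (-1 : ℤ) ^ (T \ sE).card *
                  ∑ U ∈ (T \ sE).powerset, (-1 : ℤ) ^ U.card := by
                rw [Finset.mul_sum]
                apply Finset.sum_congr rfl
                intro U hU
                rw [Finset.mem_powerset] at hU
                have hle := Finset.card_le_card hU
                calc (-1 : ℤ) ^ ((T \ sE).card - U.card)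
                    = (-1 : ℤ) ^ ((T \ sE).card - U.card) * ((-1 : ℤ) ^ 2) ^ U.card := by
                      norm_num
                  _ = (-1 : ℤ) ^ ((T \ sE).card - U.card + 2 * U.card) := by
                      rw [← pow_mul, ← pow_add]
                  _ = (-1 : ℤ) ^ ((T \ sE).card + U.card) := by congr 1; omega
                  _ = (-1 : ℤ) ^ (T \ sE).card * (-1 : ℤ) ^ U.card := pow_add _ _ _
            _ = (if E.suppSet.toFinset = T then (1 : ℤ) else 0) := by
                rw [Finset.sum_powerset_neg_one_pow_card]
                by_cases h : sE = T
                · simp [h, hsE ▸ h]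
                · have hne : ¬ (T \ sE = ∅) := by
                    rw [Finset.sdiff_eq_empty_iff_subset]
                    intro hTs
                    exact h (Finset.Subset.antisymm hsub hTs)
                  rw [if_neg hne, mul_zero, if_neg (hsE ▸ h)]
      _ = ∑ S ∈ T.powerset, (-1 : ℤ) ^ (T.card - S.card) * Nn S := by
          rw [Finset.sum_comm]
          apply Finset.sum_congr rfl
          intro S hS
          rw [hNsum S hS, Finset.mul_sum]
  -- Step C : partition by support
  have stepC : (Nat.card {E : Submodule F (Fin k → F) //
        Module.finrank F E = r ∧ E.suppSet.ncard = w} : ℤ)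
      = ∑ T ∈ Finset.powersetCard w (Finset.univ : Finset (Fin k)), Mm T := by
    have hcard : Nat.card {E : Submodule F (Fin k → F) //
        Module.finrank F E = r ∧ E.suppSet.ncard = w}
        = (Finset.univ.filter fun E : Submodule F (Fin k → F) =>
            Module.finrank F E = r ∧ E.suppSet.ncard = w).card := by
      rw [Nat.card_eq_fintype_card, Fintype.card_subtype]
    rw [hcard,
      Finset.card_eq_sum_card_fiberwise
        (f := fun E : Submodule F (Fin k → F) => E.suppSet.toFinset)
        (t := Finset.powersetCard w (Finset.univ : Finset (Fin k)))
        (fun E hE => by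
          rw [Finset.mem_coe, Finset.mem_filter] at hE
          rw [Finset.mem_coe, Finset.mem_powersetCard_univ, ← Set.ncard_eq_toFinset_card']
          exact hE.2.2)]
    push_cast
    apply Finset.sum_congr rfl
    intro T hT
    have hTw : T.card = w := Finset.mem_powersetCard_univ.mp hT
    simp only [hMm]
    congr 1
    rw [Finset.filter_filter]
    apply congrArg
    apply Finset.filter_congr
    intro E _
    constructor
    · rintro ⟨⟨h1, _⟩, h3⟩
      exact ⟨h1, by rw [← h3, Set.coe_toFinset]⟩
    · rintro ⟨h1, h2⟩
      refine ⟨⟨h1, ?_⟩, ?_⟩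
      · rw [h2, Set.ncard_coe_finset]; exact hTw
      · rw [h2]; simp
  -- value of the inner alternating sum
  have hV : ∀ T : Finset (Fin k), T.card = w →
      ∑ S ∈ T.powerset, (-1 : ℤ) ^ (T.card - S.card) * Nn S
      = ∑ j ∈ Finset.range (w + 1), (-1 : ℤ) ^ (w - j) * (w.choose j : ℤ) * g j := by
    intro T hT
    rw [Finset.sum_powerset, hT]
    apply Finset.sum_congr rfl
    intro j hj
    have hterm : ∀ S ∈ Finset.powersetCard j T,
        (-1 : ℤ) ^ (w - S.card) * Nn S = (-1 : ℤ) ^ (w - j) * g j := by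
      intro S hS
      obtain ⟨hsub', hcard⟩ := Finset.mem_powersetCard.mp hS
      rw [stepA, hcard]
    rw [Finset.sum_congr rfl hterm, Finset.sum_const, Finset.card_powersetCard, hT,
      nsmul_eq_mul]
    ring
  -- assemble
  have key : (Nat.card {E : Submodule F (Fin k → F) //
        Module.finrank F E = r ∧ E.suppSet.ncard = w} : ℤ)
      = (k.choose w : ℤ) *
        ∑ j ∈ Finset.range (w + 1), (-1 : ℤ) ^ (w - j) * (w.choose j : ℤ) * g j := by
    rw [stepC]
    have : ∀ T ∈ Finset.powersetCard w (Finset.univ : Finset (Fin k)),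
        Mm T = ∑ j ∈ Finset.range (w + 1),
          (-1 : ℤ) ^ (w - j) * (w.choose j : ℤ) * g j := by
      intro T hT
      have hTw : T.card = w := Finset.mem_powersetCard_univ.mp hT
      rw [stepB T hTw, hV T hTw]
    rw [Finset.sum_congr rfl this, Finset.sum_const, Finset.card_powersetCard,
      Finset.card_univ, Fintype.card_fin, nsmul_eq_mul]
  rw [key]
  congr 1
  -- reflect the sum
  have hreflect : ∑ j ∈ Finset.range (w + 1),
      (-1 : ℤ) ^ (w - j) * (w.choose j : ℤ) * g j
      = ∑ i ∈ Finset.range (w + 1), (-1 : ℤ) ^ i * (w.choose i : ℤ) * g (w - i) := by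
    rw [← Finset.sum_range_reflect]
    apply Finset.sum_congr rfl
    intro i hi
    rw [Finset.mem_range] at hi
    have hi' : i ≤ w := by omega
    have e1 : w + 1 - 1 - i = w - i := by omega
    rw [e1, Nat.sub_sub_self hi', Nat.choose_symm hi']
  rw [hreflect]
  -- truncate the sum
  symm
  apply Finset.sum_subset
  · apply Finset.range_subset_range.mpr; omega
  · intro i hi hnot
    rw [Finset.mem_range] at hi hnot
    have hzero : g (w - i) = 0 := by
      have hlt : w - i < r := by omega
      simp only [hg]
      norm_cast
      haveI : IsEmpty {S : Submodule F (Fin (w - i) → F) // Module.finrank F S = r} := by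
        constructor
        rintro ⟨S, hS⟩
        have h1 : Module.finrank F S ≤ Module.finrank F (Fin (w - i) → F) :=
          Submodule.finrank_le S
        rw [hS, Module.finrank_fin_fun] at h1
        omega
      exact Nat.card_of_isEmpty
    simp only [hg] at hzero ⊢
    rw [hzero, mul_zero]
end

section
/- (RGHWs of a pair do not determine the RGHWs of the dual pair) Over F_2, let C_1, C_2, C_1', C_2' ⊆ F_2^{10} be the linear codes generated respectively by the rows of G_1 = [[0,1,0,1,0,0,1,0,0,0],[1,1,1,1,1,1,1,0,1,0],[0,0,0,0,0,0,1,1,0,1],[1,0,0,1,0,0,0,0,0,0],[0,0,1,1,0,1,0,0,0,0]], G_2 = [[0,1,0,1,0,0,1,0,0,0],[1,1,1,1,1,1,1,0,1,0],[0,0,0,0,0,0,1,1,0,1]], G_1' = [[1,1,0,1,0,0,0,0,0,1],[0,1,0,1,1,1,0,1,0,0],[1,0,1,0,0,0,1,0,1,0],[1,1,1,0,0,0,0,0,0,0],[0,1,0,1,0,0,0,0,0,0]], and G_2' = [[1,1,0,1,0,0,0,0,0,1],[0,1,0,1,1,1,0,1,0,0],[1,0,1,0,0,0,1,0,1,0]].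 Then C_2 ⊆ C_1 and C_2' ⊆ C_1', and: M_1(C_1,C_2) = M_1(C_1',C_2') = 2 and M_2(C_1,C_2) = M_2(C_1',C_2') = 4 (so the two pairs have the same relative weight hierarchy), while for the dual pairs M_1(C_2^⊥,C_1^⊥) = M_1((C_2')^⊥,(C_1')^⊥) = 2 but M_2(C_2^⊥,C_1^⊥) = 3 ≠ 4 = M_2((C_2')^⊥,(C_1')^⊥). -/
open Classical

set_option maxRecDepth 8000

namespace S19


abbrev F2 := ZMod 2
abbrev V10 := Fin 10 → ZMod 2

abbrev wt1 (x : V10) : ℕ := (Finset.univ.filter (fun i => x i ≠ 0)).card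
abbrev wt2 (x y : V10) : ℕ := (Finset.univ.filter (fun i => x i ≠ 0 ∨ y i ≠ 0)).card

def memD {k : ℕ} (G : Fin k → V10) (x : V10) : Prop := ∀ j, ∑ i, x i * G j i = 0
instance {k : ℕ} (G : Fin k → V10) : DecidablePred (memD G) := fun x => by
  unfold memD; infer_instance

def spans3 (G : Fin 3 → V10) (x : V10) : Prop :=
  ∃ e0 e1 e2 : F2, e0 • G 0 + e1 • G 1 + e2 • G 2 = x
instance (G : Fin 3 → V10) (x : V10) : Decidable (spans3 G x) := by
  unfold spans3; infer_instance

def scond (P : V10 → Prop) (m : ℕ) (x : V10) : Prop := x ≠ 0 → ¬ P x → m ≤ wt1 x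
instance (P : V10 → Prop) [DecidablePred P] (m : ℕ) (x : V10) : Decidable (scond P m x) := by
  unfold scond; infer_instance

def pcond (P : V10 → Prop) (m : ℕ) (x y : V10) : Prop :=
  wt2 x y < m → x ≠ 0 → y ≠ 0 → x ≠ y → ¬ P x → ¬ P y → ¬ P (x + y) → False
instance (P : V10 → Prop) [DecidablePred P] (m : ℕ) (x y : V10) : Decidable (pcond P m x y) := by
  unfold pcond; infer_instance

lemma zmod2_cases (c : F2) : c = 0 ∨ c = 1 := by revert c; decide

lemma wt2_left_le (x y : V10) : wt2 x x ≤ wt2 x y := by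
  apply Finset.card_le_card
  intro i hi
  simp only [Finset.mem_filter] at *
  tauto

lemma add_self_f2 (y : V10) : y + y = 0 := by
  funext i
  exact CharTwo.add_self_eq_zero (y i)

lemma spans3_iff (G : Fin 3 → V10) (x : V10) :
    x ∈ Submodule.span F2 (Set.range G) ↔ spans3 G x := by
  rw [Submodule.mem_span_range_iff_exists_fun]
  constructor
  · rintro ⟨c, h⟩
    exact ⟨c 0, c 1, c 2, by rw [Fin.sum_univ_three] at h; exact h⟩
  · rintro ⟨e0, e1, e2, h⟩
    exact ⟨![e0, e1, e2], by rw [Fin.sum_univ_three]; exact h⟩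

lemma mem_dualCode_span {k : ℕ} (G : Fin k → V10) (x : V10) :
    x ∈ dualCode (Submodule.span F2 (Set.range G)) ↔ memD G x := by
  constructor
  · intro h j
    exact h (G j) (Submodule.subset_span ⟨j, rfl⟩)
  · intro h c hc
    induction hc using Submodule.span_induction with
    | mem c hc => obtain ⟨j, rfl⟩ := hc; exact h j
    | zero => simp
    | add c d _ _ hc hd =>
        simp only [Pi.add_apply, mul_add, Finset.sum_add_distrib, hc, hd, add_zero]
    | smul a c _ hc =>
        simp only [Pi.smul_apply, smul_eq_mul, mul_left_comm, ← Finset.mul_sum, hc, mul_zero]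

lemma suppSet_singleton (x : V10) :
    (Submodule.span F2 {x}).suppSet = ↑(Finset.univ.filter (fun i => x i ≠ 0)) := by
  ext i
  simp only [Submodule.suppSet, Set.mem_setOf_eq, Finset.coe_filter, Finset.mem_univ, true_and]
  constructor
  · rintro ⟨c, hc, hci⟩
    obtain ⟨a, rfl⟩ := Submodule.mem_span_singleton.mp hc
    intro hx
    exact hci (by simp [hx])
  · intro h
    exact ⟨x, Submodule.mem_span_singleton_self x, h⟩

lemma suppSet_pair (x y : V10) :
    (Submodule.span F2 (Set.range ![x, y])).suppSet
      = ↑(Finset.univ.filter (fun i => x i ≠ 0 ∨ y i ≠ 0)) := by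
  ext i
  simp only [Submodule.suppSet, Set.mem_setOf_eq, Finset.coe_filter, Finset.mem_univ, true_and]
  constructor
  · rintro ⟨c, hc, hci⟩
    obtain ⟨a, rfl⟩ := (Submodule.mem_span_range_iff_exists_fun F2).mp hc
    by_contra h
    push_neg at h
    exact hci (by simp [Fin.sum_univ_two, h.1, h.2])
  · rintro (h | h)
    · exact ⟨x, Submodule.subset_span ⟨0, rfl⟩, h⟩
    · exact ⟨y, Submodule.subset_span ⟨1, rfl⟩, h⟩

lemma li2 {x y : V10} (hx : x ≠ 0) (hy : y ≠ 0) (hxy : x ≠ y) :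
    LinearIndependent F2 ![x, y] := by
  rw [linearIndependent_fin2]
  refine ⟨hy, fun a => ?_⟩
  rcases zmod2_cases a with h | h <;> subst h
  · simpa using hx.symm
  · simpa using hxy.symm

lemma notmem_of_inf_bot {D A : Submodule F2 V10} (h : D ⊓ A = ⊥) {z : V10}
    (hzD : z ∈ D) (hz : z ≠ 0) : z ∉ A := by
  intro hzA
  have hm : z ∈ D ⊓ A := ⟨hzD, hzA⟩
  rw [h, Submodule.mem_bot] at hm
  exact hz hm

lemma subcode_card_le {D : Submodule F2 V10} {z : V10} (hz : z ∈ D) :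
    wt1 z ≤ D.suppSet.ncard := by
  show (Finset.univ.filter (fun i => z i ≠ 0)).card ≤ D.suppSet.ncard
  rw [← Set.ncard_coe_finset]
  apply Set.ncard_le_ncard _ (Set.toFinite _)
  intro i hi
  simp only [Finset.coe_filter, Finset.mem_univ, true_and, Set.mem_setOf_eq] at hi
  exact ⟨z, hz, hi⟩

lemma subcode_card_le2 {D : Submodule F2 V10} {z w : V10} (hz : z ∈ D) (hw : w ∈ D) :
    wt2 z w ≤ D.suppSet.ncard := by
  show (Finset.univ.filter (fun i => z i ≠ 0 ∨ w i ≠ 0)).card ≤ D.suppSet.ncard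
  rw [← Set.ncard_coe_finset]
  apply Set.ncard_le_ncard _ (Set.toFinite _)
  intro i hi
  simp only [Finset.coe_filter, Finset.mem_univ, true_and, Set.mem_setOf_eq] at hi
  rcases hi with h | h
  · exact ⟨z, hz, h⟩
  · exact ⟨w, hw, h⟩

lemma rghw_one_eq (C A : Submodule F2 V10) (m : ℕ) (x : V10)
    (hxC : x ∈ C) (hxA : x ∉ A) (hx0 : x ≠ 0) (hm : wt1 x = m)
    (hlb : ∀ z, z ∈ C → z ∉ A → z ≠ 0 → m ≤ wt1 z) : rghw C A 1 = m := by
  have hmem : m ∈ {w | ∃ D : Submodule F2 V10,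
      D ≤ C ∧ D ⊓ A = ⊥ ∧ Module.finrank F2 D = 1 ∧ D.suppSet.ncard = w} := by
    refine ⟨Submodule.span F2 {x}, ?_, ?_, finrank_span_singleton hx0, ?_⟩
    · rwa [Submodule.span_le, Set.singleton_subset_iff]
    · rw [eq_bot_iff]
      rintro v ⟨hv1, hv2⟩
      obtain ⟨a, rfl⟩ := Submodule.mem_span_singleton.mp hv1
      rcases zmod2_cases a with h | h <;> subst h
      · simp
      · rw [one_smul] at hv2; exact absurd hv2 hxA
    · rw [suppSet_singleton, Set.ncard_coe_finset]; exact hm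
  refine le_antisymm (Nat.sInf_le hmem) (le_csInf ⟨m, hmem⟩ ?_)
  rintro w ⟨D, hDC, hDA, hDr, rfl⟩
  have hDb : D ≠ ⊥ := by intro hD; rw [hD] at hDr; simp at hDr
  obtain ⟨z, hzD, hz0⟩ := Submodule.exists_mem_ne_zero_of_ne_bot hDb
  exact (hlb z (hDC hzD) (notmem_of_inf_bot hDA hzD hz0) hz0).trans (subcode_card_le hzD)

lemma rghw_two_eq (C A : Submodule F2 V10) (m : ℕ) (x y : V10)
    (hxC : x ∈ C) (hyC : y ∈ C) (hx0 : x ≠ 0) (hy0 : y ≠ 0) (hxy : x ≠ y)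
    (hxA : x ∉ A) (hyA : y ∉ A) (hxyA : x + y ∉ A) (hm : wt2 x y = m)
    (hlb : ∀ z w, z ∈ C → w ∈ C → z ≠ 0 → w ≠ 0 → z ≠ w →
      z ∉ A → w ∉ A → z + w ∉ A → m ≤ wt2 z w) :
    rghw C A 2 = m := by
  have hmem : m ∈ {w | ∃ D : Submodule F2 V10,
      D ≤ C ∧ D ⊓ A = ⊥ ∧ Module.finrank F2 D = 2 ∧ D.suppSet.ncard = w} := by
    refine ⟨Submodule.span F2 (Set.range ![x, y]), ?_, ?_, ?_, ?_⟩
    · rw [Submodule.span_le]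
      rintro _ ⟨i, rfl⟩
      fin_cases i
      · exact hxC
      · exact hyC
    · rw [eq_bot_iff]
      rintro v ⟨hv1, hv2⟩
      obtain ⟨a, rfl⟩ := (Submodule.mem_span_range_iff_exists_fun F2).mp hv1
      have hs : (∑ i, a i • ![x, y] i) = a 0 • x + a 1 • y := by
        simp [Fin.sum_univ_two]
      rw [hs] at hv2 ⊢
      rcases zmod2_cases (a 0) with h0 | h0 <;> rcases zmod2_cases (a 1) with h1 | h1 <;>
        rw [h0, h1] at hv2 ⊢ <;>
        simp only [zero_smul, one_smul, zero_add, add_zero] at hv2 ⊢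
      · simp
      · exact absurd hv2 hyA
      · exact absurd hv2 hxA
      · exact absurd hv2 hxyA
    · have h := finrank_span_eq_card (R := F2) (li2 hx0 hy0 hxy)
      simpa using h
    · rw [suppSet_pair, Set.ncard_coe_finset]; exact hm
  refine le_antisymm (Nat.sInf_le hmem) (le_csInf ⟨m, hmem⟩ ?_)
  rintro w ⟨D, hDC, hDA, hDr, rfl⟩
  let b := Module.finBasisOfFinrankEq F2 D hDr
  have h01 : b 0 ≠ b 1 := b.injective.ne (by decide)
  have hz0 : (b 0 : V10) ≠ 0 := fun h => b.ne_zero 0 (Subtype.ext h)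
  have hw0 : (b 1 : V10) ≠ 0 := fun h => b.ne_zero 1 (Subtype.ext h)
  have hzw : (b 0 : V10) ≠ (b 1 : V10) := fun h => h01 (Subtype.ext h)
  have hzD : (b 0 : V10) ∈ D := (b 0).2
  have hwD : (b 1 : V10) ∈ D := (b 1).2
  have hsD : (b 0 : V10) + (b 1 : V10) ∈ D := D.add_mem hzD hwD
  have hs0 : (b 0 : V10) + (b 1 : V10) ≠ 0 := by
    intro h
    apply hzw
    have h2 : (b 0 : V10) = ((b 0 : V10) + (b 1 : V10)) + (b 1 : V10) := by
      rw [add_assoc, add_self_f2, add_zero]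
    rw [h, zero_add] at h2
    exact h2
  exact (hlb _ _ (hDC hzD) (hDC hwD) hz0 hw0 hzw
    (notmem_of_inf_bot hDA hzD hz0) (notmem_of_inf_bot hDA hwD hw0)
    (notmem_of_inf_bot hDA hsD hs0)).trans (subcode_card_le2 hzD hwD)


def g1 : Fin 5 → V10 :=
  ![![0,1,0,1,0,0,1,0,0,0], ![1,1,1,1,1,1,1,0,1,0], ![0,0,0,0,0,0,1,1,0,1],
    ![1,0,0,1,0,0,0,0,0,0], ![0,0,1,1,0,1,0,0,0,0]]
def g2 : Fin 3 → V10 :=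
  ![![0,1,0,1,0,0,1,0,0,0], ![1,1,1,1,1,1,1,0,1,0], ![0,0,0,0,0,0,1,1,0,1]]
def g1' : Fin 5 → V10 :=
  ![![1,1,0,1,0,0,0,0,0,1], ![0,1,0,1,1,1,0,1,0,0], ![1,0,1,0,0,0,1,0,1,0],
    ![1,1,1,0,0,0,0,0,0,0], ![0,1,0,1,0,0,0,0,0,0]]
def g2' : Fin 3 → V10 :=
  ![![1,1,0,1,0,0,0,0,0,1], ![0,1,0,1,1,1,0,1,0,0], ![1,0,1,0,0,0,1,0,1,0]]
def h2 : Fin 7 → V10 :=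
  ![![1,0,0,0,0,0,0,0,1,0], ![0,1,0,0,0,0,1,0,0,1], ![0,0,1,0,0,0,0,0,1,0],
    ![0,0,0,1,0,0,1,0,0,1], ![0,0,0,0,1,0,0,0,1,0], ![0,0,0,0,0,1,0,0,1,0],
    ![0,0,0,0,0,0,0,1,0,1]]
def h2' : Fin 7 → V10 :=
  ![![1,0,0,0,0,0,0,0,1,1], ![0,1,0,0,0,0,0,1,0,1], ![0,0,1,0,0,0,0,0,1,0],
    ![0,0,0,1,0,0,0,1,0,1], ![0,0,0,0,1,0,0,1,0,0], ![0,0,0,0,0,1,0,1,0,0],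
    ![0,0,0,0,0,0,1,0,1,0]]

lemma keyM1C : ∀ a0 a1 a2 a3 a4 : F2,
    scond (spans3 g2) 2 (a0 • g1 0 + a1 • g1 1 + a2 • g1 2 + a3 • g1 3 + a4 • g1 4) := by decide

lemma keyM1C' : ∀ a0 a1 a2 a3 a4 : F2,
    scond (spans3 g2') 2 (a0 • g1' 0 + a1 • g1' 1 + a2 • g1' 2 + a3 • g1' 3 + a4 • g1' 4) := by decide

lemma keyM2C : ∀ a0 a1 a2 a3 a4 : F2,
    wt2 (a0 • g1 0 + a1 • g1 1 + a2 • g1 2 + a3 • g1 3 + a4 • g1 4) (a0 • g1 0 + a1 • g1 1 + a2 • g1 2 + a3 • g1 3 + a4 • g1 4) < 4 →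
    ∀ b0 b1 b2 b3 b4 : F2,
      pcond (spans3 g2) 4 (a0 • g1 0 + a1 • g1 1 + a2 • g1 2 + a3 • g1 3 + a4 • g1 4) (b0 • g1 0 + b1 • g1 1 + b2 • g1 2 + b3 • g1 3 + b4 • g1 4) := by decide

lemma keyM2C' : ∀ a0 a1 a2 a3 a4 : F2,
    wt2 (a0 • g1' 0 + a1 • g1' 1 + a2 • g1' 2 + a3 • g1' 3 + a4 • g1' 4) (a0 • g1' 0 + a1 • g1' 1 + a2 • g1' 2 + a3 • g1' 3 + a4 • g1' 4) < 4 →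
    ∀ b0 b1 b2 b3 b4 : F2,
      pcond (spans3 g2') 4 (a0 • g1' 0 + a1 • g1' 1 + a2 • g1' 2 + a3 • g1' 3 + a4 • g1' 4) (b0 • g1' 0 + b1 • g1' 1 + b2 • g1' 2 + b3 • g1' 3 + b4 • g1' 4) := by decide

lemma sec2 : ∀ z0 z1 z2 z3 z4 z5 z6 z7 z8 z9 : F2,
    memD g2 ![z0,z1,z2,z3,z4,z5,z6,z7,z8,z9] →
    ![z0,z1,z2,z3,z4,z5,z6,z7,z8,z9] = z0 • h2 0 + z1 • h2 1 + z2 • h2 2 + z3 • h2 3 + z4 • h2 4 + z5 • h2 5 + z7 • h2 6 := by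
  decide

lemma sec2' : ∀ z0 z1 z2 z3 z4 z5 z6 z7 z8 z9 : F2,
    memD g2' ![z0,z1,z2,z3,z4,z5,z6,z7,z8,z9] →
    ![z0,z1,z2,z3,z4,z5,z6,z7,z8,z9] = z0 • h2' 0 + z1 • h2' 1 + z2 • h2' 2 + z3 • h2' 3 + z4 • h2' 4 + z5 • h2' 5 + z6 • h2' 6 := by
  decide

lemma keyM1D : ∀ a0 a1 a2 a3 a4 a5 a6 : F2,
    scond (memD g1) 2 (a0 • h2 0 + a1 • h2 1 + a2 • h2 2 + a3 • h2 3 + a4 • h2 4 + a5 • h2 5 + a6 • h2 6) := by decide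

lemma keyM1D' : ∀ a0 a1 a2 a3 a4 a5 a6 : F2,
    scond (memD g1') 2 (a0 • h2' 0 + a1 • h2' 1 + a2 • h2' 2 + a3 • h2' 3 + a4 • h2' 4 + a5 • h2' 5 + a6 • h2' 6) := by decide

lemma keyM2D : ∀ a0 a1 a2 a3 a4 a5 a6 : F2,
    wt2 (a0 • h2 0 + a1 • h2 1 + a2 • h2 2 + a3 • h2 3 + a4 • h2 4 + a5 • h2 5 + a6 • h2 6) (a0 • h2 0 + a1 • h2 1 + a2 • h2 2 + a3 • h2 3 + a4 • h2 4 + a5 • h2 5 + a6 • h2 6) < 3 →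
    ∀ b0 b1 b2 b3 b4 b5 b6 : F2,
      pcond (memD g1) 3 (a0 • h2 0 + a1 • h2 1 + a2 • h2 2 + a3 • h2 3 + a4 • h2 4 + a5 • h2 5 + a6 • h2 6) (b0 • h2 0 + b1 • h2 1 + b2 • h2 2 + b3 • h2 3 + b4 • h2 4 + b5 • h2 5 + b6 • h2 6) := by decide

lemma keyM2D' : ∀ a0 a1 a2 a3 a4 a5 a6 : F2,
    wt2 (a0 • h2' 0 + a1 • h2' 1 + a2 • h2' 2 + a3 • h2' 3 + a4 • h2' 4 + a5 • h2' 5 + a6 • h2' 6) (a0 • h2' 0 + a1 • h2' 1 + a2 • h2' 2 + a3 • h2' 3 + a4 • h2' 4 + a5 • h2' 5 + a6 • h2' 6) < 4 →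
    ∀ b0 b1 b2 b3 b4 b5 b6 : F2,
      pcond (memD g1') 4 (a0 • h2' 0 + a1 • h2' 1 + a2 • h2' 2 + a3 • h2' 3 + a4 • h2' 4 + a5 • h2' 5 + a6 • h2' 6) (b0 • h2' 0 + b1 • h2' 1 + b2 • h2' 2 + b3 • h2' 3 + b4 • h2' 4 + b5 • h2' 5 + b6 • h2' 6) := by decide

lemma sub12 : Submodule.span F2 (Set.range g2) ≤ Submodule.span F2 (Set.range g1) := by
  apply Submodule.span_mono
  rintro _ ⟨j, rfl⟩
  fin_cases j
  · exact ⟨0, rfl⟩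
  · exact ⟨1, rfl⟩
  · exact ⟨2, rfl⟩

lemma sub12' : Submodule.span F2 (Set.range g2') ≤ Submodule.span F2 (Set.range g1') := by
  apply Submodule.span_mono
  rintro _ ⟨j, rfl⟩
  fin_cases j
  · exact ⟨0, rfl⟩
  · exact ⟨1, rfl⟩
  · exact ⟨2, rfl⟩

lemma valM1C : rghw (Submodule.span F2 (Set.range g1)) (Submodule.span F2 (Set.range g2)) 1 = 2 := by
  refine rghw_one_eq _ _ 2 ![1,0,0,1,0,0,0,0,0,0]
    ((Submodule.mem_span_range_iff_exists_fun F2).mpr ⟨![0,0,0,1,0], by decide⟩)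
    (fun h => absurd ((spans3_iff g2 _).mp h) (by decide))
    (by decide) (by decide) ?_
  intro z hz hzA hz0
  obtain ⟨c, rfl⟩ := (Submodule.mem_span_range_iff_exists_fun F2).mp hz
  have h1 : ¬ spans3 g2 _ := fun hs => hzA ((spans3_iff g2 _).mpr hs)
  simp only [Fin.sum_univ_five] at hz0 h1 ⊢
  exact keyM1C (c 0) (c 1) (c 2) (c 3) (c 4) hz0 h1

lemma valM1C' : rghw (Submodule.span F2 (Set.range g1')) (Submodule.span F2 (Set.range g2')) 1 = 2 := by
  refine rghw_one_eq _ _ 2 ![1,0,0,0,0,0,0,0,0,1]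
    ((Submodule.mem_span_range_iff_exists_fun F2).mpr ⟨![1,0,0,0,1], by decide⟩)
    (fun h => absurd ((spans3_iff g2' _).mp h) (by decide))
    (by decide) (by decide) ?_
  intro z hz hzA hz0
  obtain ⟨c, rfl⟩ := (Submodule.mem_span_range_iff_exists_fun F2).mp hz
  have h1 : ¬ spans3 g2' _ := fun hs => hzA ((spans3_iff g2' _).mpr hs)
  simp only [Fin.sum_univ_five] at hz0 h1 ⊢
  exact keyM1C' (c 0) (c 1) (c 2) (c 3) (c 4) hz0 h1

lemma valM2C : rghw (Submodule.span F2 (Set.range g1)) (Submodule.span F2 (Set.range g2)) 2 = 4 := by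
  refine rghw_two_eq _ _ 4 ![1,0,0,1,1,0,0,0,1,0] ![1,0,0,1,0,0,0,0,0,0]
    ((Submodule.mem_span_range_iff_exists_fun F2).mpr ⟨![1,1,0,0,1], by decide⟩)
    ((Submodule.mem_span_range_iff_exists_fun F2).mpr ⟨![0,0,0,1,0], by decide⟩)
    (by decide) (by decide) (by decide)
    (fun h => absurd ((spans3_iff g2 _).mp h) (by decide))
    (fun h => absurd ((spans3_iff g2 _).mp h) (by decide))
    (fun h => absurd ((spans3_iff g2 _).mp h) (by decide))
    (by decide) ?_
  intro z w hz hw hz0 hw0 hzw hzA hwA hzwA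
  obtain ⟨c, rfl⟩ := (Submodule.mem_span_range_iff_exists_fun F2).mp hz
  obtain ⟨d, rfl⟩ := (Submodule.mem_span_range_iff_exists_fun F2).mp hw
  have h1 : ¬ spans3 g2 _ := fun hs => hzA ((spans3_iff g2 _).mpr hs)
  have h2 : ¬ spans3 g2 _ := fun hs => hwA ((spans3_iff g2 _).mpr hs)
  have h3 : ¬ spans3 g2 _ := fun hs => hzwA ((spans3_iff g2 _).mpr hs)
  by_contra hc
  rw [not_le] at hc
  simp only [Fin.sum_univ_five] at hc hz0 hw0 hzw h1 h2 h3
  exact keyM2C (c 0) (c 1) (c 2) (c 3) (c 4)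
    (lt_of_le_of_lt (wt2_left_le _ _) hc) (d 0) (d 1) (d 2) (d 3) (d 4)
    hc hz0 hw0 hzw h1 h2 h3

lemma valM2C' : rghw (Submodule.span F2 (Set.range g1')) (Submodule.span F2 (Set.range g2')) 2 = 4 := by
  refine rghw_two_eq _ _ 4 ![1,1,1,0,0,0,0,0,0,0] ![0,1,1,0,0,0,0,0,0,1]
    ((Submodule.mem_span_range_iff_exists_fun F2).mpr ⟨![0,0,0,1,0], by decide⟩)
    ((Submodule.mem_span_range_iff_exists_fun F2).mpr ⟨![1,0,0,1,1], by decide⟩)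
    (by decide) (by decide) (by decide)
    (fun h => absurd ((spans3_iff g2' _).mp h) (by decide))
    (fun h => absurd ((spans3_iff g2' _).mp h) (by decide))
    (fun h => absurd ((spans3_iff g2' _).mp h) (by decide))
    (by decide) ?_
  intro z w hz hw hz0 hw0 hzw hzA hwA hzwA
  obtain ⟨c, rfl⟩ := (Submodule.mem_span_range_iff_exists_fun F2).mp hz
  obtain ⟨d, rfl⟩ := (Submodule.mem_span_range_iff_exists_fun F2).mp hw
  have h1 : ¬ spans3 g2' _ := fun hs => hzA ((spans3_iff g2' _).mpr hs)
  have h2 : ¬ spans3 g2' _ := fun hs => hwA ((spans3_iff g2' _).mpr hs)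
  have h3 : ¬ spans3 g2' _ := fun hs => hzwA ((spans3_iff g2' _).mpr hs)
  by_contra hc
  rw [not_le] at hc
  simp only [Fin.sum_univ_five] at hc hz0 hw0 hzw h1 h2 h3
  exact keyM2C' (c 0) (c 1) (c 2) (c 3) (c 4)
    (lt_of_le_of_lt (wt2_left_le _ _) hc) (d 0) (d 1) (d 2) (d 3) (d 4)
    hc hz0 hw0 hzw h1 h2 h3

lemma valM1D : rghw (dualCode (Submodule.span F2 (Set.range g2))) (dualCode (Submodule.span F2 (Set.range g1))) 1 = 2 := by
  refine rghw_one_eq _ _ 2 ![1,0,0,0,0,1,0,0,0,0]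
    ((mem_dualCode_span g2 _).mpr (by decide))
    (fun h => absurd ((mem_dualCode_span g1 _).mp h) (by decide))
    (by decide) (by decide) ?_
  intro z hzmem hzA hz0
  have hz10 : z = ![z 0,z 1,z 2,z 3,z 4,z 5,z 6,z 7,z 8,z 9] := by
    funext i; fin_cases i <;> rfl
  have hrepz : z = z 0 • h2 0 + z 1 • h2 1 + z 2 • h2 2 + z 3 • h2 3 + z 4 • h2 4 + z 5 • h2 5 + z 7 • h2 6 :=
    hz10.trans (sec2 (z 0) (z 1) (z 2) (z 3) (z 4) (z 5) (z 6) (z 7) (z 8) (z 9) (hz10 ▸ (mem_dualCode_span g2 z).mp hzmem))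
  have h1 : ¬ memD g1 z := fun hm => hzA ((mem_dualCode_span g1 z).mpr hm)
  rw [hrepz] at hz0 h1 ⊢
  exact keyM1D (z 0) (z 1) (z 2) (z 3) (z 4) (z 5) (z 7) hz0 h1

lemma valM1D' : rghw (dualCode (Submodule.span F2 (Set.range g2'))) (dualCode (Submodule.span F2 (Set.range g1'))) 1 = 2 := by
  refine rghw_one_eq _ _ 2 ![0,1,0,1,0,0,0,0,0,0]
    ((mem_dualCode_span g2' _).mpr (by decide))
    (fun h => absurd ((mem_dualCode_span g1' _).mp h) (by decide))
    (by decide) (by decide) ?_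
  intro z hzmem hzA hz0
  have hz10 : z = ![z 0,z 1,z 2,z 3,z 4,z 5,z 6,z 7,z 8,z 9] := by
    funext i; fin_cases i <;> rfl
  have hrepz : z = z 0 • h2' 0 + z 1 • h2' 1 + z 2 • h2' 2 + z 3 • h2' 3 + z 4 • h2' 4 + z 5 • h2' 5 + z 6 • h2' 6 :=
    hz10.trans (sec2' (z 0) (z 1) (z 2) (z 3) (z 4) (z 5) (z 6) (z 7) (z 8) (z 9) (hz10 ▸ (mem_dualCode_span g2' z).mp hzmem))
  have h1 : ¬ memD g1' z := fun hm => hzA ((mem_dualCode_span g1' z).mpr hm)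
  rw [hrepz] at hz0 h1 ⊢
  exact keyM1D' (z 0) (z 1) (z 2) (z 3) (z 4) (z 5) (z 6) hz0 h1

lemma valM2D : rghw (dualCode (Submodule.span F2 (Set.range g2))) (dualCode (Submodule.span F2 (Set.range g1))) 2 = 3 := by
  refine rghw_two_eq _ _ 3 ![1,0,0,0,0,1,0,0,0,0] ![1,0,0,0,1,0,0,0,0,0]
    ((mem_dualCode_span g2 _).mpr (by decide))
    ((mem_dualCode_span g2 _).mpr (by decide))
    (by decide) (by decide) (by decide)
    (fun h => absurd ((mem_dualCode_span g1 _).mp h) (by decide))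
    (fun h => absurd ((mem_dualCode_span g1 _).mp h) (by decide))
    (fun h => absurd ((mem_dualCode_span g1 _).mp h) (by decide))
    (by decide) ?_
  intro z w hzmem hwmem hz0 hw0 hzw hzA hwA hzwA
  have hz10 : z = ![z 0,z 1,z 2,z 3,z 4,z 5,z 6,z 7,z 8,z 9] := by
    funext i; fin_cases i <;> rfl
  have hw10 : w = ![w 0,w 1,w 2,w 3,w 4,w 5,w 6,w 7,w 8,w 9] := by
    funext i; fin_cases i <;> rfl
  have hrepz : z = z 0 • h2 0 + z 1 • h2 1 + z 2 • h2 2 + z 3 • h2 3 + z 4 • h2 4 + z 5 • h2 5 + z 7 • h2 6 :=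
    hz10.trans (sec2 (z 0) (z 1) (z 2) (z 3) (z 4) (z 5) (z 6) (z 7) (z 8) (z 9) (hz10 ▸ (mem_dualCode_span g2 z).mp hzmem))
  have hrepw : w = w 0 • h2 0 + w 1 • h2 1 + w 2 • h2 2 + w 3 • h2 3 + w 4 • h2 4 + w 5 • h2 5 + w 7 • h2 6 :=
    hw10.trans (sec2 (w 0) (w 1) (w 2) (w 3) (w 4) (w 5) (w 6) (w 7) (w 8) (w 9) (hw10 ▸ (mem_dualCode_span g2 w).mp hwmem))
  have h1 : ¬ memD g1 z := fun hm => hzA ((mem_dualCode_span g1 z).mpr hm)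
  have h2 : ¬ memD g1 w := fun hm => hwA ((mem_dualCode_span g1 w).mpr hm)
  have h3 : ¬ memD g1 (z + w) := fun hm => hzwA ((mem_dualCode_span g1 _).mpr hm)
  by_contra hc
  rw [not_le] at hc
  rw [hrepz] at hc hz0 hzw h1 h3
  rw [hrepw] at hc hw0 hzw h2 h3
  exact keyM2D (z 0) (z 1) (z 2) (z 3) (z 4) (z 5) (z 7)
    (lt_of_le_of_lt (wt2_left_le _ _) hc) (w 0) (w 1) (w 2) (w 3) (w 4) (w 5) (w 7)
    hc hz0 hw0 hzw h1 h2 h3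

lemma valM2D' : rghw (dualCode (Submodule.span F2 (Set.range g2'))) (dualCode (Submodule.span F2 (Set.range g1'))) 2 = 4 := by
  refine rghw_two_eq _ _ 4 ![0,0,0,1,0,1,0,0,0,1] ![0,1,0,0,0,1,0,0,0,1]
    ((mem_dualCode_span g2' _).mpr (by decide))
    ((mem_dualCode_span g2' _).mpr (by decide))
    (by decide) (by decide) (by decide)
    (fun h => absurd ((mem_dualCode_span g1' _).mp h) (by decide))
    (fun h => absurd ((mem_dualCode_span g1' _).mp h) (by decide))
    (fun h => absurd ((mem_dualCode_span g1' _).mp h) (by decide))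
    (by decide) ?_
  intro z w hzmem hwmem hz0 hw0 hzw hzA hwA hzwA
  have hz10 : z = ![z 0,z 1,z 2,z 3,z 4,z 5,z 6,z 7,z 8,z 9] := by
    funext i; fin_cases i <;> rfl
  have hw10 : w = ![w 0,w 1,w 2,w 3,w 4,w 5,w 6,w 7,w 8,w 9] := by
    funext i; fin_cases i <;> rfl
  have hrepz : z = z 0 • h2' 0 + z 1 • h2' 1 + z 2 • h2' 2 + z 3 • h2' 3 + z 4 • h2' 4 + z 5 • h2' 5 + z 6 • h2' 6 :=
    hz10.trans (sec2' (z 0) (z 1) (z 2) (z 3) (z 4) (z 5) (z 6) (z 7) (z 8) (z 9) (hz10 ▸ (mem_dualCode_span g2' z).mp hzmem))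
  have hrepw : w = w 0 • h2' 0 + w 1 • h2' 1 + w 2 • h2' 2 + w 3 • h2' 3 + w 4 • h2' 4 + w 5 • h2' 5 + w 6 • h2' 6 :=
    hw10.trans (sec2' (w 0) (w 1) (w 2) (w 3) (w 4) (w 5) (w 6) (w 7) (w 8) (w 9) (hw10 ▸ (mem_dualCode_span g2' w).mp hwmem))
  have h1 : ¬ memD g1' z := fun hm => hzA ((mem_dualCode_span g1' z).mpr hm)
  have h2 : ¬ memD g1' w := fun hm => hwA ((mem_dualCode_span g1' w).mpr hm)
  have h3 : ¬ memD g1' (z + w) := fun hm => hzwA ((mem_dualCode_span g1' _).mpr hm)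
  by_contra hc
  rw [not_le] at hc
  rw [hrepz] at hc hz0 hzw h1 h3
  rw [hrepw] at hc hw0 hzw h2 h3
  exact keyM2D' (z 0) (z 1) (z 2) (z 3) (z 4) (z 5) (z 6)
    (lt_of_le_of_lt (wt2_left_le _ _) hc) (w 0) (w 1) (w 2) (w 3) (w 4) (w 5) (w 6)
    hc hz0 hw0 hzw h1 h2 h3

end S19

/-- RGHWs of a pair do not determine the RGHWs of the dual pair:
for the explicit binary codes `C₁, C₂, C₁', C₂' ⊆ F_2^10` generated by the rows of
`G₁, G₂, G₁', G₂'` below, we have `C₂ ⊆ C₁`, `C₂' ⊆ C₁'`,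
`M_1(C₁,C₂) = M_1(C₁',C₂') = 2`, `M_2(C₁,C₂) = M_2(C₁',C₂') = 4`, while for the duals
`M_1(C₂^⊥,C₁^⊥) = M_1((C₂')^⊥,(C₁')^⊥) = 2` but
`M_2(C₂^⊥,C₁^⊥) = 3 ≠ 4 = M_2((C₂')^⊥,(C₁')^⊥)`. -/
theorem statement_19 :
    let G₁ : Fin 5 → (Fin 10 → ZMod 2) :=
      ![![0,1,0,1,0,0,1,0,0,0], ![1,1,1,1,1,1,1,0,1,0], ![0,0,0,0,0,0,1,1,0,1],
        ![1,0,0,1,0,0,0,0,0,0], ![0,0,1,1,0,1,0,0,0,0]]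
    let G₂ : Fin 3 → (Fin 10 → ZMod 2) :=
      ![![0,1,0,1,0,0,1,0,0,0], ![1,1,1,1,1,1,1,0,1,0], ![0,0,0,0,0,0,1,1,0,1]]
    let G₁' : Fin 5 → (Fin 10 → ZMod 2) :=
      ![![1,1,0,1,0,0,0,0,0,1], ![0,1,0,1,1,1,0,1,0,0], ![1,0,1,0,0,0,1,0,1,0],
        ![1,1,1,0,0,0,0,0,0,0], ![0,1,0,1,0,0,0,0,0,0]]
    let G₂' : Fin 3 → (Fin 10 → ZMod 2) :=
      ![![1,1,0,1,0,0,0,0,0,1], ![0,1,0,1,1,1,0,1,0,0], ![1,0,1,0,0,0,1,0,1,0]]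
    let C₁ := Submodule.span (ZMod 2) (Set.range G₁)
    let C₂ := Submodule.span (ZMod 2) (Set.range G₂)
    let C₁' := Submodule.span (ZMod 2) (Set.range G₁')
    let C₂' := Submodule.span (ZMod 2) (Set.range G₂')
    C₂ ≤ C₁ ∧ C₂' ≤ C₁' ∧
    rghw C₁ C₂ 1 = 2 ∧ rghw C₁' C₂' 1 = 2 ∧
    rghw C₁ C₂ 2 = 4 ∧ rghw C₁' C₂' 2 = 4 ∧
    rghw (dualCode C₂) (dualCode C₁) 1 = 2 ∧
    rghw (dualCode C₂') (dualCode C₁') 1 = 2 ∧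
    rghw (dualCode C₂) (dualCode C₁) 2 = 3 ∧
    rghw (dualCode C₂') (dualCode C₁') 2 = 4 := by
  
  intro G₁ G₂ G₁' G₂' C₁ C₂ C₁' C₂'
  exact ⟨S19.sub12, S19.sub12', S19.valM1C, S19.valM1C', S19.valM2C, S19.valM2C',
    S19.valM1D, S19.valM1D', S19.valM2D, S19.valM2D'⟩
end
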